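/- Let G be a finite group, S a normal subgroup of G, p and q distinct primes with q not dividing |S|, and P₁ a Sylow p-subgroup of S such that G = S·C_G(P₁). If G/S has a nilpotent Hall {p,q}-subgroup, then G has a nilpotent Hall {p,q}-subgroup. -/

import Mathlib

open Subgroup Pointwise

/-- `H` is a nilpotent Hall `{p,q}`-subgroup of `G`: its order involves only the primes
`p` and `q`, its index is coprime to `pq`, and it is nilpotent. -/
def IsNilpotentHallPQSubgroup (p q : ℕ) {G : Type*} [Group G] (H : Subgroup G) : Prop :=
  (∀ r : ℕ, r.Prime → r ∣ Nat.card H → r = p ∨ r = q) ∧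
  Nat.Coprime H.index (p * q) ∧
  Group.IsNilpotent H

private lemma aux_card_map {G : Type*} [Group G] [Finite G] (S : Subgroup G) [S.Normal]
    (X : Subgroup G) :
    Nat.card X = Nat.card (X.map (QuotientGroup.mk' S)) * Nat.card (S.subgroupOf X) := by
  set f := (QuotientGroup.mk' S).comp X.subtype with hfdef
  have hker : f.ker = S.subgroupOf X := by
    ext x
    simp [hfdef, MonoidHom.mem_ker, Subgroup.mem_subgroupOf, QuotientGroup.eq_one_iff]
  have hrange : f.range = X.map (QuotientGroup.mk' S) := by
    rw [hfdef, MonoidHom.range_comp, Subgroup.range_subtype]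
  calc Nat.card X = Nat.card (↥X ⧸ f.ker) * Nat.card f.ker :=
        Subgroup.card_eq_card_quotient_mul_card_subgroup _
    _ = Nat.card (X.map (QuotientGroup.mk' S)) * Nat.card (S.subgroupOf X) := by
        rw [← hker, ← hrange]
        congr 1
        exact Nat.card_congr (QuotientGroup.quotientKerEquivRange f).toEquiv

private lemma aux_card_subgroupOf_dvd {G : Type*} [Group G] [Finite G] (S X : Subgroup G) :
    Nat.card (S.subgroupOf X) ∣ Nat.card S := by
  have h1 : Nat.card (S.subgroupOf X) = Nat.card ((S.subgroupOf X).map X.subtype) :=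
    Nat.card_congr (Subgroup.equivMapOfInjective _ _ X.subtype_injective).toEquiv
  rw [h1, Subgroup.subgroupOf_map_subtype]
  exact Subgroup.card_dvd_of_le inf_le_left

/-- If `S ⊴ G`, `q ∤ |S|`, `P₁` is a Sylow `p`-subgroup of `S` with `G = S·C_G(P₁)`,
and `G/S` has a nilpotent Hall `{p,q}`-subgroup, then so does `G`. -/
theorem nilpotentHall_of_quotient
    (G : Type*) [Group G] [Finite G] (p q : ℕ) (hp : p.Prime) (hq : q.Prime) (hpq : p ≠ q)
    (S : Subgroup G) [S.Normal] (hqS : ¬ q ∣ Nat.card S)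
    (P₁ : Sylow p S)
    (hfac : S ⊔ Subgroup.centralizer (((P₁ : Subgroup S).map S.subtype : Subgroup G) : Set G) = ⊤)
    (hquot : ∃ H : Subgroup (G ⧸ S), IsNilpotentHallPQSubgroup p q H) :
    ∃ H : Subgroup G, IsNilpotentHallPQSubgroup p q H := by
  classical
  haveI : Fact p.Prime := ⟨hp⟩
  haveI : Fact q.Prime := ⟨hq⟩
  obtain ⟨Hb, hHbprimes, hHbindex, hHbnil⟩ := hquot
  set π : G →* G ⧸ S := QuotientGroup.mk' S with hπdef
  have hπsurj : Function.Surjective π := QuotientGroup.mk'_surjective S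
  set P₀ : Subgroup G := (P₁ : Subgroup S).map S.subtype with hP₀def
  have hP₀S : P₀ ≤ S := by
    rintro x ⟨y, _, rfl⟩
    exact y.2
  have hP₀pg : IsPGroup p P₀ := P₁.isPGroup'.map _
  set C : Subgroup G := Subgroup.centralizer (P₀ : Set G) with hCdef
  have hCcent : ∀ c ∈ C, ∀ z ∈ P₀, c * z * c⁻¹ = z := by
    intro c hc z hz
    have h := (Subgroup.mem_centralizer_iff.mp hc) z hz
    rw [← h, mul_inv_cancel_right]
  set K : Subgroup G := Hb.comap π with hKdef
  have hSK : S ≤ K := by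
    intro s hs
    have h1 : π s = 1 := (QuotientGroup.eq_one_iff s).mpr hs
    simp only [hKdef, Subgroup.mem_comap, h1]
    exact Hb.one_mem
  have hmapK : K.map π = Hb := Subgroup.map_comap_eq_self_of_surjective hπsurj Hb
  set D : Subgroup G := K ⊓ C with hDdef
  set T : Subgroup G := P₀ ⊔ D with hTdef
  have hP₀T : P₀ ≤ T := le_sup_left
  have hDT : D ≤ T := le_sup_right
  have hTK : T ≤ K := sup_le (hP₀S.trans hSK) inf_le_left
  -- K = S * D elementwise
  have hKSD : ∀ k ∈ K, ∃ s ∈ S, ∃ d ∈ D, k = s * d := by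
    intro k hk
    have hk2 : k ∈ ((S : Set G) * (C : Set G)) := by
      rw [← Subgroup.normal_mul S C, hfac]
      simp
    obtain ⟨s, hs, c, hc, rfl⟩ := hk2
    refine ⟨s, hs, c, ⟨?_, hc⟩, rfl⟩
    have h2 : s⁻¹ * (s * c) ∈ K := K.mul_mem (K.inv_mem (hSK hs)) hk
    simpa using h2
  have hmapT : T.map π = Hb := by
    apply le_antisymm
    · rw [← hmapK]
      exact Subgroup.map_mono hTK
    · intro h hh
      have h1 : h ∈ K.map π := hmapK ▸ hh
      obtain ⟨k, hk, rfl⟩ := h1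
      obtain ⟨s, hs, d, hd, rfl⟩ := hKSD k hk
      have h2 : π (s * d) = π d := by
        have h0 : π s = 1 := (QuotientGroup.eq_one_iff s).mpr hs
        rw [map_mul, h0, one_mul]
      rw [h2]
      exact ⟨d, hDT hd, rfl⟩
  -- Sylow subgroups of Hb
  obtain ⟨Pb⟩ : Nonempty (Sylow p ↥Hb) := inferInstance
  obtain ⟨Qb⟩ : Nonempty (Sylow q ↥Hb) := inferInstance
  have htfae := (isNilpotent_of_finite_tfae (G := ↥Hb)).out 0 3
  have hPbNorm : (↑Pb : Subgroup ↥Hb).Normal := htfae.mp hHbnil p ⟨hp⟩ Pb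
  have hQbNorm : (↑Qb : Subgroup ↥Hb).Normal := htfae.mp hHbnil q ⟨hq⟩ Qb
  set Pq : Subgroup (G ⧸ S) := (Pb : Subgroup ↥Hb).map Hb.subtype with hPqdef
  set Qq : Subgroup (G ⧸ S) := (Qb : Subgroup ↥Hb).map Hb.subtype with hQqdef
  have hPqHb : Pq ≤ Hb := Subgroup.map_subtype_le _
  have hQqHb : Qq ≤ Hb := Subgroup.map_subtype_le _
  have hPqN : ∀ h ∈ Hb, ∀ x ∈ Pq, h * x * h⁻¹ ∈ Pq := by
    intro h hh x hx
    obtain ⟨x', hx', rfl⟩ := hx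
    exact ⟨(⟨h, hh⟩ : ↥Hb) * x' * (⟨h, hh⟩ : ↥Hb)⁻¹, hPbNorm.conj_mem x' hx' _, rfl⟩
  have hcommPQq : ∀ x ∈ Pq, ∀ y ∈ Qq, Commute x y := by
    intro x hx y hy
    obtain ⟨x', hx', rfl⟩ := hx
    obtain ⟨y', hy', rfl⟩ := hy
    have hdisj : Disjoint (Pb : Subgroup ↥Hb) (Qb : Subgroup ↥Hb) :=
      IsPGroup.disjoint_of_ne p q hpq _ _ Pb.isPGroup' Qb.isPGroup'
    have h1 := Subgroup.commute_of_normal_of_disjoint _ _ hPbNorm hQbNorm hdisj x' y' hx' hy'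
    have h2 := congrArg Hb.subtype h1
    simpa [Commute, SemiconjBy] using h2
  -- q-elements of Hb lie in Qq
  have hqelem : ∀ a : G ⧸ S, a ∈ Hb → (∃ n : ℕ, a ^ q ^ n = 1) → a ∈ Qq := by
    rintro a ha ⟨n, hn⟩
    set a' : ↥Hb := (⟨a, ha⟩ : ↥Hb) with ha'def
    have ha'pow : a' ^ q ^ n = 1 := by
      apply Subtype.ext
      simpa [ha'def] using hn
    have hzp : IsPGroup q (Subgroup.zpowers a') := by
      intro x
      obtain ⟨k, hk⟩ := Subgroup.mem_zpowers_iff.mp x.2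
      refine ⟨n, ?_⟩
      have h1 : (x : ↥Hb) ^ q ^ n = 1 := by
        rw [← hk, ← zpow_natCast, ← zpow_mul, mul_comm, zpow_mul, zpow_natCast, ha'pow, one_zpow]
      apply Subtype.ext
      simpa using h1
    obtain ⟨Q₂, hQ₂⟩ := hzp.exists_le_sylow
    haveI := Sylow.unique_of_normal Qb hQbNorm
    have hQ₂Qb : Q₂ = Qb := Subsingleton.elim _ _
    exact ⟨a', (hQ₂Qb ▸ hQ₂) (Subgroup.mem_zpowers a'), rfl⟩
  -- cardinal bookkeeping
  have hcardG_ne : (Nat.card G) ≠ 0 := Nat.card_pos.ne'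
  set A := (Nat.card G).factorization p with hAdef
  set B := (Nat.card G).factorization q with hBdef
  set sP := (Nat.card S).factorization p with hsPdef
  set hP := (Nat.card Hb).factorization p with hhPdef
  set hQ := (Nat.card Hb).factorization q with hhQdef
  have hpHbi : ¬ p ∣ Hb.index := by
    intro hdvd
    have h1 : p ∣ Nat.gcd Hb.index (p * q) := Nat.dvd_gcd hdvd (dvd_mul_right p q)
    rw [Nat.Coprime.gcd_eq_one hHbindex] at h1
    exact hp.ne_one (Nat.eq_one_of_dvd_one h1)
  have hqHbi : ¬ q ∣ Hb.index := by
    intro hdvd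
    have h1 : q ∣ Nat.gcd Hb.index (p * q) := Nat.dvd_gcd hdvd (dvd_mul_left q p)
    rw [Nat.Coprime.gcd_eq_one hHbindex] at h1
    exact hq.ne_one (Nat.eq_one_of_dvd_one h1)
  have hGfact : Nat.card G = Nat.card S * Nat.card Hb * Hb.index := by
    rw [Subgroup.card_eq_card_quotient_mul_card_subgroup S, ← Subgroup.card_mul_index Hb]
    ring
  have hSne : Nat.card S ≠ 0 := Nat.card_pos.ne'
  have hHbne : Nat.card Hb ≠ 0 := Nat.card_pos.ne'
  have hIne : Hb.index ≠ 0 := by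
    intro h0
    rw [hGfact, h0, mul_zero] at hcardG_ne
    exact hcardG_ne rfl
  have hAeq : A = sP + hP := by
    rw [hAdef, hGfact, Nat.factorization_mul (Nat.mul_ne_zero hSne hHbne) hIne,
      Nat.factorization_mul hSne hHbne, Finsupp.add_apply, Finsupp.add_apply,
      Nat.factorization_eq_zero_of_not_dvd hpHbi, add_zero, hsPdef, hhPdef]
  have hBeq : B = hQ := by
    rw [hBdef, hGfact, Nat.factorization_mul (Nat.mul_ne_zero hSne hHbne) hIne,
      Nat.factorization_mul hSne hHbne, Finsupp.add_apply, Finsupp.add_apply,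
      Nat.factorization_eq_zero_of_not_dvd hqHbi, add_zero,
      Nat.factorization_eq_zero_of_not_dvd hqS, zero_add, hhQdef]
  have hcardP₀ : Nat.card P₀ = p ^ sP := by
    have h1 : Nat.card P₀ = Nat.card (P₁ : Subgroup S) :=
      (Nat.card_congr (Subgroup.equivMapOfInjective _ _ S.subtype_injective).toEquiv).symm
    rw [h1, Sylow.card_eq_multiplicity, hsPdef]
  have hcardPq : Nat.card Pq = p ^ hP := by
    have h1 : Nat.card Pq = Nat.card (Pb : Subgroup ↥Hb) :=
      (Nat.card_congr (Subgroup.equivMapOfInjective _ _ Hb.subtype_injective).toEquiv).symm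
    rw [h1, Sylow.card_eq_multiplicity, hhPdef]
  have hcardQq : Nat.card Qq = q ^ hQ := by
    have h1 : Nat.card Qq = Nat.card (Qb : Subgroup ↥Hb) :=
      (Nat.card_congr (Subgroup.equivMapOfInjective _ _ Hb.subtype_injective).toEquiv).symm
    rw [h1, Sylow.card_eq_multiplicity, hhQdef]
  -- the subgroup M
  set M : Subgroup G := T ⊓ Pq.comap π with hMdef
  have hMT : M ≤ T := inf_le_left
  have hP₀M : P₀ ≤ M := by
    refine le_inf hP₀T ?_
    intro z hz
    have h1 : π z = 1 := (QuotientGroup.eq_one_iff z).mpr (hP₀S hz)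
    simp only [Subgroup.mem_comap, h1]
    exact Pq.one_mem
  have hmapM : M.map π = Pq := by
    apply le_antisymm
    · rintro _ ⟨x, hx, rfl⟩
      exact hx.2
    · intro u hu
      have h1 : u ∈ T.map π := by rw [hmapT]; exact hPqHb hu
      obtain ⟨t, ht, rfl⟩ := h1
      exact ⟨t, ⟨ht, hu⟩, rfl⟩
  have hcardM : Nat.card M = p ^ hP * Nat.card (S.subgroupOf M) := by
    have := aux_card_map S M
    rw [← hπdef, hmapM, hcardPq] at this
    exact this
  have hqSsub : ∀ X : Subgroup G, ¬ q ∣ Nat.card (S.subgroupOf X) := fun X hdvd =>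
    hqS (hdvd.trans (aux_card_subgroupOf_dvd S X))
  have hqM : ¬ q ∣ Nat.card M := by
    rw [hcardM]
    intro hdvd
    rcases (Nat.Prime.dvd_mul hq).mp hdvd with h | h
    · exact hpq ((Nat.prime_dvd_prime_iff_eq hq hp).mp (hq.dvd_of_dvd_pow h)).symm
    · exact hqSsub M h
  have hpM : p ^ A ∣ Nat.card M := by
    rw [hAeq, pow_add, hcardM]
    have h1 : Nat.card P₀ ∣ Nat.card (S.subgroupOf M) := by
      have h2 : Nat.card P₀ = Nat.card (P₀.subgroupOf M) :=
        (Nat.card_congr (Subgroup.subgroupOfEquivOfLe hP₀M).toEquiv).symm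
      rw [h2]
      refine Subgroup.card_dvd_of_le ?_
      intro x hx
      rw [Subgroup.mem_subgroupOf] at hx ⊢
      exact hP₀S hx
    rw [hcardP₀] at h1
    rw [mul_comm (p ^ sP) (p ^ hP)]
    exact mul_dvd_mul dvd_rfl h1
  -- card T
  have hcardT : Nat.card T = Nat.card Hb * Nat.card (S.subgroupOf T) := by
    have := aux_card_map S T
    rw [← hπdef, hmapT] at this
    exact this
  have hqT : q ^ B ∣ Nat.card T := by
    rw [hcardT, hBeq, hhQdef]
    exact dvd_mul_of_dvd_left (Nat.ordProj_dvd (Nat.card Hb) q) _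
  -- T normalizes P₀
  have hTnormP₀ : ∀ t ∈ T, ∀ z ∈ P₀, t * z * t⁻¹ ∈ P₀ := by
    have hTle : T ≤ Subgroup.normalizer (P₀ : Set G) := by
      refine sup_le Subgroup.le_normalizer ?_
      intro d hd
      rw [Subgroup.mem_normalizer_iff]
      intro h
      constructor
      · intro hh
        rw [hCcent d hd.2 h hh]
        exact hh
      · intro hh
        have h1 := hCcent d⁻¹ (C.inv_mem hd.2) _ hh
        have h2 : h = d * h * d⁻¹ := by rw [← h1]; group
        rw [h2]
        exact hh
    intro t ht z hz
    exact (Subgroup.mem_normalizer_iff.mp (hTle ht) z).mp hz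
  -- work inside T
  set tM : Subgroup ↥T := M.subgroupOf T with htMdef
  have hπT : ∀ t : ↥T, π ↑t ∈ Hb := by
    intro t
    exact hTK t.2
  haveI htMnormal : tM.Normal := by
    constructor
    intro x hx g
    have hx2 : (x : G) ∈ M := Subgroup.mem_subgroupOf.mp hx
    rw [htMdef, Subgroup.mem_subgroupOf]
    have hgx : ((g * x * g⁻¹ : ↥T) : G) = (g : G) * (x : G) * (g : G)⁻¹ := by
      push_cast
      rfl
    refine Subgroup.mem_inf.mpr ⟨?_, ?_⟩
    · rw [hgx]
      exact mul_mem (mul_mem g.2 (SetLike.coe_mem x)) (inv_mem g.2)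
    · rw [Subgroup.mem_comap, hgx, map_mul, map_mul, map_inv]
      exact hPqN _ (hπT g) _ hx2.2
  have hcardtM : Nat.card tM = Nat.card M :=
    Nat.card_congr (Subgroup.subgroupOfEquivOfLe hMT).toEquiv
  -- p-group P₀ inside tM
  have hP₀mem_tM : ∀ z ∈ P₀, ∀ (h1 : z ∈ T), (⟨z, h1⟩ : ↥T) ∈ tM := by
    intro z hz h1
    rw [htMdef, Subgroup.mem_subgroupOf]
    exact hP₀M hz
  set P₀' : Subgroup ↥tM := (P₀.subgroupOf T).subgroupOf tM with hP₀'def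
  have hP₀'mem : ∀ y : ↥tM, y ∈ P₀' ↔ ((y : ↥T) : G) ∈ P₀ := by
    intro y
    rw [hP₀'def, Subgroup.mem_subgroupOf, Subgroup.mem_subgroupOf]
  have hP₀'pg : IsPGroup p P₀' := by
    intro y
    obtain ⟨k, hk⟩ := hP₀pg ⟨_, (hP₀'mem y).mp y.2⟩
    refine ⟨k, ?_⟩
    have h1 := congrArg Subtype.val hk
    apply Subtype.ext
    apply Subtype.ext
    apply Subtype.ext
    simpa using h1
  obtain ⟨PM, hP₀'PM⟩ := hP₀'pg.exists_le_sylow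
  have hcardPM : Nat.card PM = p ^ A := by
    rw [Sylow.card_eq_multiplicity]
    congr 1
    have htMne : Nat.card tM ≠ 0 := Nat.card_pos.ne'
    apply le_antisymm
    · have h1 : p ^ (Nat.card tM).factorization p ∣ Nat.card G :=
        (Nat.ordProj_dvd _ _).trans ((Subgroup.card_subgroup_dvd_card tM).trans
          (Subgroup.card_subgroup_dvd_card T))
      exact (Nat.Prime.pow_dvd_iff_le_factorization hp hcardG_ne).mp h1
    · refine (Nat.Prime.pow_dvd_iff_le_factorization hp htMne).mp ?_
      rw [hcardtM]
      exact hpM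
  -- Frattini argument
  have hfrattini : Subgroup.normalizer (((PM : Subgroup ↥tM).map tM.subtype : Subgroup ↥T) : Set ↥T) ⊔ tM = ⊤ :=
    Sylow.normalizer_sup_eq_top PM
  set Nn : Subgroup ↥T := Subgroup.normalizer (((PM : Subgroup ↥tM).map tM.subtype : Subgroup ↥T) : Set ↥T) with hNndef
  have hqNn : q ^ B ∣ Nat.card Nn := by
    have e2 := (QuotientGroup.quotientInfEquivProdNormalQuotient Nn tM).toEquiv
    rw [hfrattini] at e2
    have h1 : Nat.card Nn = Nat.card (↥Nn ⧸ tM.subgroupOf Nn) * Nat.card (tM.subgroupOf Nn) :=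
      Subgroup.card_eq_card_quotient_mul_card_subgroup _
    have h4 : Nat.card (↥(⊤ : Subgroup ↥T)) =
        Nat.card (↥(⊤ : Subgroup ↥T) ⧸ tM.subgroupOf (⊤ : Subgroup ↥T)) *
        Nat.card (tM.subgroupOf (⊤ : Subgroup ↥T)) :=
      Subgroup.card_eq_card_quotient_mul_card_subgroup _
    have h5 : Nat.card (↥(⊤ : Subgroup ↥T)) = Nat.card T :=
      Nat.card_congr Subgroup.topEquiv.toEquiv
    have h6 : Nat.card (tM.subgroupOf (⊤ : Subgroup ↥T)) = Nat.card tM :=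
      Nat.card_congr (Subgroup.subgroupOfEquivOfLe le_top).toEquiv
    have h7 : Nat.card (↥Nn ⧸ tM.subgroupOf Nn) =
        Nat.card (↥(⊤ : Subgroup ↥T) ⧸ tM.subgroupOf (⊤ : Subgroup ↥T)) := Nat.card_congr e2
    have h8 : Nat.card T = Nat.card (↥Nn ⧸ tM.subgroupOf Nn) * Nat.card tM := by
      rw [← h5, h4, h6, h7]
    have h9 : q ^ B ∣ Nat.card (↥Nn ⧸ tM.subgroupOf Nn) := by
      have h10 : Nat.Coprime (q ^ B) (Nat.card tM) := by
        refine Nat.Coprime.pow_left _ ((Nat.Prime.coprime_iff_not_dvd hq).mpr ?_)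
        rw [hcardtM]
        exact hqM
      refine h10.dvd_of_dvd_mul_right ?_
      rw [← h8]
      exact hqT
    exact h9.trans (Dvd.intro _ h1.symm)
  obtain ⟨Qy⟩ : Nonempty (Sylow q ↥Nn) := inferInstance
  have hcardQy : Nat.card Qy = q ^ B := by
    rw [Sylow.card_eq_multiplicity]
    congr 1
    have hNnne : Nat.card Nn ≠ 0 := Nat.card_pos.ne'
    apply le_antisymm
    · have h1 : q ^ (Nat.card Nn).factorization q ∣ Nat.card G :=
        (Nat.ordProj_dvd _ _).trans ((Subgroup.card_subgroup_dvd_card Nn).trans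
          (Subgroup.card_subgroup_dvd_card T))
      exact (Nat.Prime.pow_dvd_iff_le_factorization hq hcardG_ne).mp h1
    · exact (Nat.Prime.pow_dvd_iff_le_factorization hq hNnne).mp hqNn
  -- the subgroups P and Q of G
  set P : Subgroup G := (((PM : Subgroup ↥tM).map tM.subtype).map T.subtype) with hPdef
  set Q : Subgroup G := (((Qy : Subgroup ↥Nn).map Nn.subtype).map T.subtype) with hQdef
  have hcardP : Nat.card P = p ^ A := by
    rw [hPdef,
      ← Nat.card_congr (Subgroup.equivMapOfInjective _ _ T.subtype_injective).toEquiv,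
      ← Nat.card_congr (Subgroup.equivMapOfInjective _ _ tM.subtype_injective).toEquiv]
    exact hcardPM
  have hcardQ : Nat.card Q = q ^ B := by
    rw [hQdef,
      ← Nat.card_congr (Subgroup.equivMapOfInjective _ _ T.subtype_injective).toEquiv,
      ← Nat.card_congr (Subgroup.equivMapOfInjective _ _ Nn.subtype_injective).toEquiv]
    exact hcardQy
  have hPT : P ≤ T := Subgroup.map_subtype_le _
  have hQT : Q ≤ T := Subgroup.map_subtype_le _
  have hPM' : P ≤ M := by
    rintro _ ⟨x, hx, rfl⟩
    obtain ⟨y, _, rfl⟩ := hx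
    exact Subgroup.mem_subgroupOf.mp y.2
  have hP₀P : P₀ ≤ P := by
    intro z hz
    have h1 : z ∈ T := hP₀T hz
    have h2 : (⟨z, h1⟩ : ↥T) ∈ tM := hP₀mem_tM z hz h1
    have h3 : (⟨⟨z, h1⟩, h2⟩ : ↥tM) ∈ P₀' := (hP₀'mem _).mpr hz
    exact ⟨⟨z, h1⟩, ⟨⟨⟨z, h1⟩, h2⟩, hP₀'PM h3, rfl⟩, rfl⟩
  have hπPq : ∀ x ∈ P, π x ∈ Pq := fun x hx => (hPM' hx).2
  have hQN : ∀ a ∈ Q, ∀ x ∈ P, a * x * a⁻¹ ∈ P := by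
    rintro _ ⟨a', ha', rfl⟩ _ ⟨x', hx', rfl⟩
    obtain ⟨a'', _, rfl⟩ := ha'
    have hconj : (Nn.subtype a'') * x' * (Nn.subtype a'')⁻¹ ∈
        (PM : Subgroup ↥tM).map tM.subtype :=
      (Subgroup.mem_normalizer_iff.mp a''.2 x').mp hx'
    refine ⟨_, hconj, ?_⟩
    simp [map_mul, map_inv]
  have hP_S_P₀ : ∀ x ∈ P, x ∈ S → x ∈ P₀ := by
    intro x hxP hxS
    have hPpg : IsPGroup p P := IsPGroup.of_card hcardP
    set R : Subgroup ↥S := (P ⊓ S).subgroupOf S with hRdef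
    have hRpg : IsPGroup p R := by
      have h0 : IsPGroup p ↥(P ⊓ S : Subgroup G) := IsPGroup.to_inf_left hPpg
      exact h0.of_equiv (Subgroup.subgroupOfEquivOfLe (inf_le_right : P ⊓ S ≤ S)).symm
    have hP₁le : (P₁ : Subgroup ↥S) ≤ R := by
      intro y hy
      rw [hRdef, Subgroup.mem_subgroupOf]
      exact ⟨hP₀P ⟨y, hy, rfl⟩, y.2⟩
    have hReq : R = (P₁ : Subgroup ↥S) := P₁.3 hRpg hP₁le
    have h1 : (⟨x, hxS⟩ : ↥S) ∈ R := by
      rw [hRdef, Subgroup.mem_subgroupOf]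
      exact ⟨hxP, hxS⟩
    rw [hReq] at h1
    exact ⟨⟨x, hxS⟩, h1, rfl⟩
  -- orders of elements of Q
  have hordQ : ∀ a ∈ Q, orderOf a ∣ q ^ B := by
    intro a ha
    calc orderOf a = orderOf (⟨a, ha⟩ : ↥Q) := (Subgroup.orderOf_mk a ha).symm
      _ ∣ Nat.card Q := orderOf_dvd_natCard _
      _ = q ^ B := hcardQ
  have hπQ : ∀ a ∈ Q, π a ∈ Qq := by
    intro a ha
    refine hqelem _ (hπT ⟨a, hQT ha⟩) ⟨B, ?_⟩
    rw [← map_pow]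
    have h1 : a ^ q ^ B = 1 := orderOf_dvd_iff_pow_eq_one.mp (hordQ a ha)
    rw [h1, map_one]
  -- elements of Q centralize P₀
  have hQcentP₀ : ∀ a ∈ Q, ∀ z ∈ P₀, a * z * a⁻¹ = z := by
    set P₀T : Subgroup ↥T := P₀.subgroupOf T with hP₀Tdef
    haveI hP₀TN : P₀T.Normal := by
      constructor
      intro y hy g
      rw [hP₀Tdef, Subgroup.mem_subgroupOf] at hy ⊢
      have h1 := hTnormP₀ ↑g g.2 ↑y hy
      simpa using h1
    set φ : ↥T →* MulAut ↥P₀T := MulAut.conjNormal with hφdef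
    have htop : P₀T ⊔ D.subgroupOf T = ⊤ := by
      apply Subgroup.map_injective T.subtype_injective
      rw [Subgroup.map_sup, Subgroup.subgroupOf_map_subtype, Subgroup.subgroupOf_map_subtype,
        inf_of_le_left hP₀T, inf_of_le_left hDT, ← MonoidHom.range_eq_map,
        Subgroup.range_subtype]
    have hφD : ∀ d : ↥T, (d : G) ∈ D → φ d = 1 := by
      intro d hd
      refine DFunLike.ext _ _ fun z => ?_
      refine Subtype.ext (Subtype.ext ?_)
      show ((((φ d) z : ↥P₀T) : ↥T) : G) = ((((1 : MulAut ↥P₀T) z : ↥P₀T) : ↥T) : G)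
      have h0 : (((φ d) z : ↥P₀T) : ↥T) = d * (z : ↥T) * d⁻¹ := MulAut.conjNormal_apply d z
      have h1 : ((((1 : MulAut ↥P₀T) z : ↥P₀T) : ↥T) : G) = (((z : ↥P₀T) : ↥T) : G) := rfl
      rw [h0, h1]
      push_cast
      exact hCcent d hd.2 _ (Subgroup.mem_subgroupOf.mp z.2)
    have hrange : ∀ a : ↥T, φ a ∈ (P₀T.map φ) := by
      intro a
      have h1 : φ a ∈ MonoidHom.range φ := ⟨a, rfl⟩
      rw [MonoidHom.range_eq_map, ← htop, Subgroup.map_sup] at h1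
      have h2 : (D.subgroupOf T).map φ = ⊥ := by
        rw [eq_bot_iff]
        rintro _ ⟨d, hd, rfl⟩
        rw [Subgroup.mem_bot]
        exact hφD d (Subgroup.mem_subgroupOf.mp hd)
      rw [h2, sup_bot_eq] at h1
      exact h1
    have hpImage : IsPGroup p (P₀T.map φ) :=
      (hP₀pg.of_equiv (Subgroup.subgroupOfEquivOfLe hP₀T).symm).map φ
    intro a haQ z hz
    have haT : a ∈ T := hQT haQ
    have hord1 : orderOf (φ ⟨a, haT⟩) ∣ q ^ B := by
      refine (orderOf_map_dvd φ _).trans ?_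
      rw [Subgroup.orderOf_mk]
      exact hordQ a haQ
    obtain ⟨k, hk⟩ := IsPGroup.iff_card.mp hpImage
    have hord2 : orderOf (φ ⟨a, haT⟩) ∣ p ^ k := by
      have h1 : orderOf (⟨φ ⟨a, haT⟩, hrange _⟩ : ↥(P₀T.map φ)) ∣ Nat.card (P₀T.map φ) :=
        orderOf_dvd_natCard _
      rw [Subgroup.orderOf_mk, hk] at h1
      exact h1
    have h1 : φ ⟨a, haT⟩ = 1 := by
      have h3 : orderOf (φ ⟨a, haT⟩) ∣ Nat.gcd (p ^ k) (q ^ B) :=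
        Nat.dvd_gcd hord2 hord1
      rw [Nat.Coprime.gcd_eq_one (Nat.coprime_pow_primes _ _ hp hq hpq)] at h3
      exact orderOf_eq_one_iff.mp (Nat.eq_one_of_dvd_one h3)
    have hzT : z ∈ T := hP₀T hz
    have hz' : (⟨z, hzT⟩ : ↥T) ∈ P₀T := Subgroup.mem_subgroupOf.mpr hz
    have h2 := congrArg (fun ψ : MulAut ↥P₀T => ((ψ ⟨⟨z, hzT⟩, hz'⟩ : ↥P₀T) : ↥T).1) h1
    simp only [hφdef] at h2
    rw [show ((((1 : MulAut ↥P₀T) ⟨⟨z, hzT⟩, hz'⟩ : ↥P₀T) : ↥T)).1 = z from rfl] at h2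
    rw [show ((((MulAut.conjNormal (⟨a, haT⟩ : ↥T)) ⟨⟨z, hzT⟩, hz'⟩ : ↥P₀T) : ↥T)).1
        = a * z * a⁻¹ by rw [MulAut.conjNormal_apply]; rfl] at h2
    exact h2
  -- P and Q commute elementwise
  have hcommPQ : ∀ x ∈ P, ∀ a ∈ Q, a * x * a⁻¹ = x := by
    intro x hx a ha
    set c : G := x⁻¹ * (a * x * a⁻¹) with hcdef
    have haxP : a * x * a⁻¹ ∈ P := hQN a ha x hx
    have hcP : c ∈ P := P.mul_mem (P.inv_mem hx) haxP
    have hcS : c ∈ S := by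
      have hcomm := hcommPQq (π x) (hπPq x hx) (π a) (hπQ a ha)
      have h1 : π a * π x * (π a)⁻¹ = π x := by
        rw [← hcomm.eq, mul_inv_cancel_right]
      have h2 : π c = 1 := by
        rw [hcdef]
        simp only [map_mul, map_inv]
        rw [h1]
        simp
      exact (QuotientGroup.eq_one_iff c).mp h2
    have hcP₀ : c ∈ P₀ := hP_S_P₀ c hcP hcS
    have hac : a * c * a⁻¹ = c := hQcentP₀ a ha c hcP₀
    have h3 : a * x * a⁻¹ = x * c := by rw [hcdef]; group
    have hconjpow : ∀ n : ℕ, a * c ^ n * a⁻¹ = c ^ n := by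
      intro n
      induction n with
      | zero => simp
      | succ m ihm =>
        have hstep : a * c ^ (m + 1) * a⁻¹ = (a * c ^ m * a⁻¹) * (a * c * a⁻¹) := by
          rw [pow_succ]; group
        rw [hstep, ihm, hac, ← pow_succ]
    have hkey : ∀ n : ℕ, a ^ n * x * (a ^ n)⁻¹ = x * c ^ n := by
      intro n
      induction n with
      | zero => simp
      | succ n ih =>
        have hcn : a * c ^ n * a⁻¹ = c ^ n := hconjpow n
        calc a ^ (n + 1) * x * (a ^ (n + 1))⁻¹
            = a * (a ^ n * x * (a ^ n)⁻¹) * a⁻¹ := by rw [pow_succ]; group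
          _ = a * (x * c ^ n) * a⁻¹ := by rw [ih]
          _ = (a * x * a⁻¹) * (a * c ^ n * a⁻¹) := by group
          _ = (x * c) * c ^ n := by rw [h3, hcn]
          _ = x * c ^ (n + 1) := by rw [pow_succ']; group
    have h4 := hkey (orderOf a)
    rw [pow_orderOf_eq_one a] at h4
    simp only [one_mul, inv_one, mul_one] at h4
    have hcn1 : c ^ orderOf a = 1 := by
      have := h4.symm
      rwa [mul_eq_left] at this
    have hc1 : c = 1 := by
      have h5 : orderOf c ∣ orderOf a := orderOf_dvd_of_pow_eq_one hcn1
      have h6 : orderOf c ∣ q ^ B := h5.trans (hordQ a ha)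
      have h7 : orderOf c ∣ p ^ sP := by
        have h8 : orderOf c = orderOf (⟨c, hcP₀⟩ : ↥P₀) := (Subgroup.orderOf_mk c hcP₀).symm
        rw [h8, ← hcardP₀]
        exact orderOf_dvd_natCard _
      have h9 : orderOf c ∣ Nat.gcd (p ^ sP) (q ^ B) := Nat.dvd_gcd h7 h6
      rw [Nat.Coprime.gcd_eq_one (Nat.coprime_pow_primes _ _ hp hq hpq)] at h9
      exact orderOf_eq_one_iff.mp (Nat.eq_one_of_dvd_one h9)
    rw [h3, hc1, mul_one]
  -- assemble the Hall subgroup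
  have hcomm' : ∀ (y : ↥P) (z : ↥Q), Commute (P.subtype y) (Q.subtype z) := by
    intro y z
    have h1 := hcommPQ ↑y y.2 ↑z z.2
    exact (mul_inv_eq_iff_eq_mul.mp h1).symm
  set f : ↥P × ↥Q →* G := MonoidHom.noncommCoprod P.subtype Q.subtype hcomm' with hfdef
  have hfinj : Function.Injective f := by
    rw [← MonoidHom.ker_eq_bot_iff, eq_bot_iff]
    rintro ⟨y, z⟩ hyz
    rw [MonoidHom.mem_ker] at hyz
    have h1 : (y : G) * z = 1 := hyz
    have h2 : (y : G) = (↑z : G)⁻¹ := eq_inv_of_mul_eq_one_left h1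
    have hyQ : (y : G) ∈ Q := h2 ▸ Q.inv_mem z.2
    have hordp : orderOf (y : G) ∣ p ^ A := by
      rw [← hcardP, ← Subgroup.orderOf_mk (y : G) y.2]
      exact orderOf_dvd_natCard _
    have hordq : orderOf (y : G) ∣ q ^ B := by
      rw [← hcardQ, ← Subgroup.orderOf_mk (y : G) hyQ]
      exact orderOf_dvd_natCard _
    have h3 : orderOf (y : G) ∣ Nat.gcd (p ^ A) (q ^ B) := Nat.dvd_gcd hordp hordq
    rw [Nat.Coprime.gcd_eq_one (Nat.coprime_pow_primes _ _ hp hq hpq)] at h3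
    have hy1 : (y : G) = 1 := orderOf_eq_one_iff.mp (Nat.eq_one_of_dvd_one h3)
    have hz1 : (z : G) = 1 := by
      rw [hy1, one_mul] at h1
      exact h1
    rw [Subgroup.mem_bot]
    exact Prod.ext (Subtype.ext hy1) (Subtype.ext hz1)
  have hcardH : Nat.card f.range = p ^ A * q ^ B := by
    calc Nat.card f.range = Nat.card (↥P × ↥Q) :=
          (Nat.card_congr (MonoidHom.ofInjective hfinj).toEquiv).symm
      _ = Nat.card P * Nat.card Q := Nat.card_prod _ _
      _ = p ^ A * q ^ B := by rw [hcardP, hcardQ]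
  refine ⟨f.range, ?_, ?_, ?_⟩
  · intro r hr hdvd
    rw [hcardH] at hdvd
    rcases (Nat.Prime.dvd_mul hr).mp hdvd with h | h
    · exact Or.inl ((Nat.prime_dvd_prime_iff_eq hr hp).mp (hr.dvd_of_dvd_pow h))
    · exact Or.inr ((Nat.prime_dvd_prime_iff_eq hr hq).mp (hr.dvd_of_dvd_pow h))
  · have hmul := Subgroup.card_mul_index f.range
    have hpind : ¬ p ∣ f.range.index := by
      intro hdvd
      have h1 : p ^ (A + 1) ∣ Nat.card G := by
        rw [← hmul, hcardH, pow_succ]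
        exact mul_dvd_mul (dvd_mul_right _ _) hdvd
      exact (Nat.pow_succ_factorization_not_dvd hcardG_ne hp) h1
    have hqind : ¬ q ∣ f.range.index := by
      intro hdvd
      have h1 : q ^ (B + 1) ∣ Nat.card G := by
        rw [← hmul, hcardH, pow_succ]
        exact mul_dvd_mul (dvd_mul_left _ _) hdvd
      exact (Nat.pow_succ_factorization_not_dvd hcardG_ne hq) h1
    exact Nat.Coprime.mul_right (Nat.coprime_comm.mp (hp.coprime_iff_not_dvd.mpr hpind))
      (Nat.coprime_comm.mp (hq.coprime_iff_not_dvd.mpr hqind))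
  · haveI h1 : Group.IsNilpotent ↥P := (IsPGroup.of_card hcardP).isNilpotent
    haveI h2 : Group.IsNilpotent ↥Q := (IsPGroup.of_card hcardQ).isNilpotent
    exact nilpotent_of_mulEquiv (MonoidHom.ofInjective hfinj)
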